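/- arXiv:1909.03910 — 2 statements merged into one kernel-verified Lean document; each statement's English description precedes it below -/
import Mathlib

section
/- In the Artin braid group B_n, define e_{k,l} = a_{k,l}a_{k+1,l}^{-1} where a_{i,j} = σ_{j-1}⋯σ_i. Then the elements e_{2,n}, e_{3,n-1}, …, e_{r(n),s(n)} are pairwise commutative, where r(n)=n/2, s(n)=(n+4)/2 if n is even and r(n)=(n+1)/2, s(n)=(n+3)/2 if n is odd. -/
/-- `a_{i,j} = σ_{j-1} σ_{j-2} ⋯ σ_i`. -/
def aWord {G : Type*} [Group G] (σ : ℕ → G) (i j : ℕ) : G :=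
  ((List.range (j - i)).map (fun t => σ (j - 1 - t))).prod

/-- `e_{k,l} = a_{k,l} a_{k+1,l}⁻¹`. -/
def eWord {G : Type*} [Group G] (σ : ℕ → G) (k l : ℕ) : G :=
  aWord σ k l * (aWord σ (k + 1) l)⁻¹

section Aux
variable {G : Type*} [Group G] (σ : ℕ → G)

lemma aWord_head (i j : ℕ) (h : i < j) :
    aWord σ i j = σ (j - 1) * aWord σ i (j - 1) := by
  unfold aWord
  obtain ⟨d, hd⟩ : ∃ d, j - i = d + 1 := ⟨j - i - 1, by omega⟩
  have hd' : j - 1 - i = d := by omega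
  rw [hd, hd', List.range_succ_eq_map, List.map_cons, List.prod_cons, List.map_map]
  have h0 : j - 1 - 0 = j - 1 := by omega
  rw [h0]
  congr 1
  congr 1
  apply List.map_congr_left
  intro t _
  simp only [Function.comp_apply]
  congr 1
  omega

lemma aWord_last (i j : ℕ) (h : i < j) :
    aWord σ i j = aWord σ (i + 1) j * σ i := by
  unfold aWord
  obtain ⟨d, hd⟩ : ∃ d, j - i = d + 1 := ⟨j - i - 1, by omega⟩
  have hd' : j - (i + 1) = d := by omega
  rw [hd, hd', List.range_succ, List.map_append, List.prod_append]
  congr 1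
  simp only [List.map_cons, List.map_nil, List.prod_cons, List.prod_nil, mul_one]
  congr 1; omega

lemma commute_aWord (g : G) (i j : ℕ)
    (h : ∀ t, i ≤ t → t < j → Commute g (σ t)) :
    Commute g (aWord σ i j) := by
  induction j with
  | zero =>
    have : (0 : ℕ) - i = 0 := by omega
    simp [aWord, this]
  | succ j ih =>
    rcases le_or_gt (j + 1) i with hle | hlt
    · have : j + 1 - i = 0 := by omega
      simp [aWord, this]
    · rw [aWord_head σ i (j + 1) hlt]
      simp only [Nat.add_sub_cancel]
      exact (h j (by omega) (by omega)).mul_right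
        (ih fun t ht ht' => h t ht (by omega))

end Aux

section Main
variable {G : Type*} [Group G] {n : ℕ} {σ : ℕ → G}

lemma shift_aWord
    (hcomm : ∀ i j : ℕ, 1 ≤ i → i + 1 < j → j ≤ n - 1 → σ i * σ j = σ j * σ i)
    (hbraid : ∀ i : ℕ, 1 ≤ i → i + 1 ≤ n - 1 →
      σ i * σ (i + 1) * σ i = σ (i + 1) * σ i * σ (i + 1))
    (m j : ℕ) (hm : 1 ≤ m) (hmj : m ≤ j) :
    ∀ l, j + 2 ≤ l → l ≤ n → σ j * aWord σ m l = aWord σ m l * σ (j + 1) := by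
  intro l hl
  induction l, hl using Nat.le_induction with
  | base =>
    intro hn
    have h1 : aWord σ m (j + 2) = σ (j + 1) * aWord σ m (j + 1) := by
      have := aWord_head σ m (j + 2) (by omega)
      simpa using this
    have h2 : aWord σ m (j + 1) = σ j * aWord σ m j := by
      have := aWord_head σ m (j + 1) (by omega)
      simpa using this
    have hA : Commute (σ (j + 1)) (aWord σ m j) :=
      commute_aWord σ _ m j fun t ht ht' =>
        ((hcomm t (j + 1) (by omega) (by omega) (by omega)).symm :
          σ (j + 1) * σ t = σ t * σ (j + 1))
    have hb := hbraid j (by omega) (by omega)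
    rw [h1, h2]
    calc σ j * (σ (j + 1) * (σ j * aWord σ m j))
        = (σ j * σ (j + 1) * σ j) * aWord σ m j := by group
      _ = (σ (j + 1) * σ j * σ (j + 1)) * aWord σ m j := by rw [hb]
      _ = σ (j + 1) * (σ j * (σ (j + 1) * aWord σ m j)) := by group
      _ = σ (j + 1) * (σ j * (aWord σ m j * σ (j + 1))) := by rw [hA.eq]
      _ = σ (j + 1) * (σ j * aWord σ m j) * σ (j + 1) := by group
  | succ l hl ih =>
    intro hn
    have h1 : aWord σ m (l + 1) = σ l * aWord σ m l := by
      have := aWord_head σ m (l + 1) (by omega)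
      simpa using this
    have hc : σ j * σ l = σ l * σ j := hcomm j l (by omega) (by omega) (by omega)
    rw [h1, ← mul_assoc, hc, mul_assoc, ih (by omega), ← mul_assoc, mul_assoc]

lemma commute_sigma_eWord
    (hcomm : ∀ i j : ℕ, 1 ≤ i → i + 1 < j → j ≤ n - 1 → σ i * σ j = σ j * σ i)
    (hbraid : ∀ i : ℕ, 1 ≤ i → i + 1 ≤ n - 1 →
      σ i * σ (i + 1) * σ i = σ (i + 1) * σ i * σ (i + 1))
    (k l j : ℕ) (hk : 1 ≤ k) (hln : l ≤ n) (hj1 : k + 1 ≤ j) (hj2 : j + 2 ≤ l) :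
    Commute (σ j) (eWord σ k l) := by
  have hw : aWord σ k l = aWord σ (k + 1) l * σ k := aWord_last σ k l (by omega)
  have hshift : σ j * aWord σ (k + 1) l = aWord σ (k + 1) l * σ (j + 1) :=
    shift_aWord hcomm hbraid (k + 1) j (by omega) (by omega) l (by omega) hln
  set w := aWord σ (k + 1) l with hwdef
  have h2 : σ (j + 1) * w⁻¹ = w⁻¹ * σ j := by
    have := congrArg (fun x => w⁻¹ * x * w⁻¹) hshift
    simpa [mul_assoc] using this.symm
  have hck : σ (j + 1) * σ k = σ k * σ (j + 1) :=
    (hcomm k (j + 1) hk (by omega) (by omega)).symm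
  show σ j * eWord σ k l = eWord σ k l * σ j
  unfold eWord
  rw [hw]
  calc σ j * (w * σ k * w⁻¹)
      = (σ j * w) * (σ k * w⁻¹) := by group
    _ = (w * σ (j + 1)) * (σ k * w⁻¹) := by rw [hshift]
    _ = w * (σ (j + 1) * σ k) * w⁻¹ := by group
    _ = w * (σ k * σ (j + 1)) * w⁻¹ := by rw [hck]
    _ = (w * σ k) * (σ (j + 1) * w⁻¹) := by group
    _ = (w * σ k) * (w⁻¹ * σ j) := by rw [h2]
    _ = w * σ k * w⁻¹ * σ j := by group

end Main

/-- In the Artin braid group `B_n`, the elements `e_{2,n}, e_{3,n-1}, …, e_{r(n),s(n)}`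
(that is, the `e_{k, n+2-k}` for `2 ≤ k ≤ ⌊(n+1)/2⌋`) are pairwise commutative. -/
theorem stmt_3 {G : Type*} [Group G] (n : ℕ) (σ : ℕ → G)
    (hcomm : ∀ i j : ℕ, 1 ≤ i → i + 1 < j → j ≤ n - 1 → σ i * σ j = σ j * σ i)
    (hbraid : ∀ i : ℕ, 1 ≤ i → i + 1 ≤ n - 1 →
      σ i * σ (i + 1) * σ i = σ (i + 1) * σ i * σ (i + 1))
    (k l : ℕ) (hk : 2 ≤ k) (hkl : k < l) (hl : l ≤ (n + 1) / 2) :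
    eWord σ k (n + 2 - k) * eWord σ l (n + 2 - l) =
      eWord σ l (n + 2 - l) * eWord σ k (n + 2 - k) := by
  have hn5 : 5 ≤ n := by omega
  have key : ∀ t, l ≤ t → t < n + 2 - l → Commute (eWord σ k (n + 2 - k)) (σ t) := by
    intro t ht ht'
    exact (commute_sigma_eWord hcomm hbraid k (n + 2 - k) t (by omega) (by omega)
      (by omega) (by omega)).symm
  have h1 : Commute (eWord σ k (n + 2 - k)) (aWord σ l (n + 2 - l)) :=
    commute_aWord σ _ l (n + 2 - l) fun t ht ht' => key t ht ht'
  have h2 : Commute (eWord σ k (n + 2 - k)) (aWord σ (l + 1) (n + 2 - l)) :=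
    commute_aWord σ _ (l + 1) (n + 2 - l) fun t ht ht' => key t (by omega) ht'
  exact (h1.mul_right h2.inv_right).eq
end

section
/- In the Artin braid group B_n, with a_{i,j} = σ_{j-1}⋯σ_i and e_{k,l} = a_{k,l}a_{k+1,l}^{-1}, for every k with 2 < k ≤ ⌊(n+1)/2⌋ one has e_{k,n+2-k}·a_{1,n} = a_{1,n}·e_{k+1,n+3-k}. -/
lemma aWord_of_le {G : Type*} [Group G] (σ : ℕ → G) {i j : ℕ} (h : j ≤ i) :
    aWord σ i j = 1 := by
  simp [aWord, Nat.sub_eq_zero_of_le h]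

lemma aWord_succ_top {G : Type*} [Group G] (σ : ℕ → G) {i j : ℕ} (h : i ≤ j) :
    aWord σ i (j + 1) = σ j * aWord σ i j := by
  unfold aWord
  have h1 : j + 1 - i = (j - i) + 1 := by omega
  rw [h1, List.range_succ_eq_map, List.map_cons, List.prod_cons, List.map_map]
  have h2 : j + 1 - 1 - 0 = j := by omega
  rw [h2]
  have hf : ((fun t => σ (j + 1 - 1 - t)) ∘ (· + 1)) = (fun t => σ (j - 1 - t)) := by
    funext t
    simp only [Function.comp_apply]
    congr 1
    omega
  rw [hf]

lemma aWord_succ_left {G : Type*} [Group G] (σ : ℕ → G) {i j : ℕ} (h : i < j) :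
    aWord σ i j = aWord σ (i + 1) j * σ i := by
  unfold aWord
  have h1 : j - i = (j - (i + 1)) + 1 := by omega
  rw [h1, List.range_succ, List.map_append, List.prod_append]
  simp only [List.map_cons, List.map_nil, List.prod_cons, List.prod_nil, mul_one]
  congr 2
  omega

lemma aWord_split {G : Type*} [Group G] (σ : ℕ → G) {i m j : ℕ} (h1 : i ≤ m) (h2 : m ≤ j) :
    aWord σ i j = aWord σ m j * aWord σ i m := by
  induction m, h1 using Nat.le_induction with
  | base => rw [aWord_of_le σ (le_refl i), mul_one]
  | succ m hm ih =>
    rw [aWord_succ_top σ hm, ih (by omega), aWord_succ_left σ (show m < j by omega),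
      mul_assoc]

lemma sigma_comm_aWord {G : Type*} [Group G] (σ : ℕ → G) (p i : ℕ) :
    ∀ j, (∀ t, i ≤ t → t < j → σ p * σ t = σ t * σ p) →
      σ p * aWord σ i j = aWord σ i j * σ p := by
  intro j
  induction j with
  | zero => intro _; rw [aWord_of_le σ (Nat.zero_le i), one_mul, mul_one]
  | succ m ih =>
    intro h
    by_cases hm : i ≤ m
    · rw [aWord_succ_top σ hm, ← mul_assoc, h m hm (by omega), mul_assoc,
        ih (fun t ht1 ht2 => h t ht1 (by omega)), mul_assoc]
    · rw [aWord_of_le σ (by omega), one_mul, mul_one]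

section

variable {G : Type*} [Group G] (n : ℕ) (σ : ℕ → G)
  (hcomm : ∀ i j : ℕ, 1 ≤ i → i + 1 < j → j ≤ n - 1 → σ i * σ j = σ j * σ i)
  (hbraid : ∀ i : ℕ, 1 ≤ i → i + 1 ≤ n - 1 →
    σ i * σ (i + 1) * σ i = σ (i + 1) * σ i * σ (i + 1))

include hcomm hbraid

lemma sigma_shift (i : ℕ) (h1 : 1 ≤ i) (h2 : i + 2 ≤ n) :
    σ i * aWord σ 1 n = aWord σ 1 n * σ (i + 1) := by
  have hs1 : aWord σ 1 n = aWord σ (i + 2) n * aWord σ 1 (i + 2) :=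
    aWord_split σ (by omega) (by omega)
  have hs2 : aWord σ 1 (i + 2) = aWord σ i (i + 2) * aWord σ 1 i :=
    aWord_split σ (by omega) (by omega)
  have hs3 : aWord σ i (i + 2) = σ (i + 1) * σ i := by
    rw [show i + 2 = (i + 1) + 1 from rfl, aWord_succ_top σ (by omega),
      aWord_succ_top σ (le_refl i), aWord_of_le σ (le_refl i), mul_one]
  have c1 : σ i * aWord σ (i + 2) n = aWord σ (i + 2) n * σ i :=
    sigma_comm_aWord σ i (i + 2) n (fun t ht1 ht2 => hcomm i t h1 (by omega) (by omega))
  have c2 : σ (i + 1) * aWord σ 1 i = aWord σ 1 i * σ (i + 1) :=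
    sigma_comm_aWord σ (i + 1) 1 i
      (fun t ht1 ht2 => (hcomm t (i + 1) ht1 (by omega) (by omega)).symm)
  have hb := hbraid i h1 (by omega)
  rw [hs1, hs2, hs3]
  calc σ i * (aWord σ (i + 2) n * (σ (i + 1) * σ i * aWord σ 1 i))
      = (σ i * aWord σ (i + 2) n) * (σ (i + 1) * σ i * aWord σ 1 i) := by group
    _ = (aWord σ (i + 2) n * σ i) * (σ (i + 1) * σ i * aWord σ 1 i) := by rw [c1]
    _ = aWord σ (i + 2) n * ((σ i * σ (i + 1) * σ i) * aWord σ 1 i) := by group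
    _ = aWord σ (i + 2) n * ((σ (i + 1) * σ i * σ (i + 1)) * aWord σ 1 i) := by rw [hb]
    _ = aWord σ (i + 2) n * (σ (i + 1) * σ i * (σ (i + 1) * aWord σ 1 i)) := by group
    _ = aWord σ (i + 2) n * (σ (i + 1) * σ i * (aWord σ 1 i * σ (i + 1))) := by rw [c2]
    _ = aWord σ (i + 2) n * (σ (i + 1) * σ i * aWord σ 1 i) * σ (i + 1) := by group

lemma aWord_shift (k : ℕ) (hk : 1 ≤ k) :
    ∀ l, l + 1 ≤ n →
      aWord σ k l * aWord σ 1 n = aWord σ 1 n * aWord σ (k + 1) (l + 1) := by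
  intro l
  induction l with
  | zero =>
    intro _
    have e1 : aWord σ k 0 = 1 := aWord_of_le σ (Nat.zero_le k)
    have e2 : aWord σ (k + 1) (0 + 1) = 1 := aWord_of_le σ (by omega)
    rw [e1, e2, one_mul, mul_one]
  | succ m ih =>
    intro hl
    by_cases hm : k ≤ m
    · rw [aWord_succ_top σ hm, aWord_succ_top σ (by omega : k + 1 ≤ m + 1)]
      calc σ m * aWord σ k m * aWord σ 1 n
          = σ m * (aWord σ k m * aWord σ 1 n) := by group
        _ = σ m * (aWord σ 1 n * aWord σ (k + 1) (m + 1)) := by rw [ih (by omega)]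
        _ = (σ m * aWord σ 1 n) * aWord σ (k + 1) (m + 1) := by group
        _ = (aWord σ 1 n * σ (m + 1)) * aWord σ (k + 1) (m + 1) := by
            rw [sigma_shift n σ hcomm hbraid m (by omega) (by omega)]
        _ = aWord σ 1 n * (σ (m + 1) * aWord σ (k + 1) (m + 1)) := by group
    · have e1 : aWord σ k (m + 1) = 1 := aWord_of_le σ (by omega)
      have e2 : aWord σ (k + 1) (m + 1 + 1) = 1 := aWord_of_le σ (by omega)
      rw [e1, e2, one_mul, mul_one]

end

/-- In the Artin braid group `B_n`, for every `k` with `2 < k ≤ ⌊(n+1)/2⌋` one has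
`e_{k,n+2-k} · a_{1,n} = a_{1,n} · e_{k+1,n+3-k}`. -/
theorem stmt_4 {G : Type*} [Group G] (n : ℕ) (σ : ℕ → G)
    (hcomm : ∀ i j : ℕ, 1 ≤ i → i + 1 < j → j ≤ n - 1 → σ i * σ j = σ j * σ i)
    (hbraid : ∀ i : ℕ, 1 ≤ i → i + 1 ≤ n - 1 →
      σ i * σ (i + 1) * σ i = σ (i + 1) * σ i * σ (i + 1))
    (k : ℕ) (hk : 2 < k) (hk' : k ≤ (n + 1) / 2) :
    eWord σ k (n + 2 - k) * aWord σ 1 n = aWord σ 1 n * eWord σ (k + 1) (n + 3 - k) := by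
  have hn : 5 ≤ n := by omega
  set l := n + 2 - k with hl
  have hl1 : n + 3 - k = l + 1 := by omega
  rw [hl1]
  have h1 : aWord σ k l * aWord σ 1 n = aWord σ 1 n * aWord σ (k + 1) (l + 1) :=
    aWord_shift n σ hcomm hbraid k (by omega) l (by omega)
  have h2 : aWord σ (k + 1) l * aWord σ 1 n = aWord σ 1 n * aWord σ (k + 2) (l + 1) :=
    aWord_shift n σ hcomm hbraid (k + 1) (by omega) l (by omega)
  have h2' : (aWord σ (k + 1) l)⁻¹ * aWord σ 1 n
      = aWord σ 1 n * (aWord σ (k + 2) (l + 1))⁻¹ := by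
    rw [inv_mul_eq_iff_eq_mul, ← mul_assoc, h2]
    group
  unfold eWord
  calc aWord σ k l * (aWord σ (k + 1) l)⁻¹ * aWord σ 1 n
      = aWord σ k l * ((aWord σ (k + 1) l)⁻¹ * aWord σ 1 n) := by group
    _ = aWord σ k l * (aWord σ 1 n * (aWord σ (k + 2) (l + 1))⁻¹) := by rw [h2']
    _ = (aWord σ k l * aWord σ 1 n) * (aWord σ (k + 2) (l + 1))⁻¹ := by group
    _ = (aWord σ 1 n * aWord σ (k + 1) (l + 1)) * (aWord σ (k + 2) (l + 1))⁻¹ := by rw [h1]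
    _ = aWord σ 1 n * (aWord σ (k + 1) (l + 1) * (aWord σ (k + 1 + 1) (l + 1))⁻¹) := by group
end
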